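/- Let L be a linear operator on E and let v : ℝ → E be differentiable at t with ‖v t‖ = 1 and v'(t) = L (v t) − Re⟨v t, L (v t)⟩ • v t. Define 𝒫 s : E →ₗ[ℂ] E as the rank-one operator x ↦ ⟨v s, x⟩ • v s. Then s ↦ 𝒫 s is differentiable at t, with derivative L ∘ 𝒫 t + 𝒫 t ∘ L† − (2·Re⟨v t, L (v t)⟩) • 𝒫 t, where L† is the adjoint of L. -/

import Mathlib

/-- The rank-one (projection) operator `x ↦ ⟨u, x⟩ • u`, as a continuous linear map. -/
noncomputable def rankOneC {E : Type*} [NormedAddCommGroup E] [InnerProductSpace ℂ E]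
    (u : E) : E →L[ℂ] E :=
  (innerSL ℂ u).smulRight u

/-- The asymmetric rank-one operator `x ↦ ⟨u, x⟩ • w`. -/
noncomputable def rankOneC2 {E : Type*} [NormedAddCommGroup E] [InnerProductSpace ℂ E]
    (p : E × E) : E →L[ℂ] E :=
  (innerSL ℂ p.1).smulRight p.2

lemma rankOneC2_bilinear {E : Type*} [NormedAddCommGroup E] [InnerProductSpace ℂ E] :
    IsBoundedBilinearMap ℝ (fun p : E × E => rankOneC2 p) := by
  constructor
  · intro u u' w
    ext x
    simp [rankOneC2, inner_add_left, add_smul]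
  · intro c u w
    ext x
    simp only [rankOneC2, ContinuousLinearMap.smulRight_apply, innerSL_apply_apply,
      ContinuousLinearMap.smul_apply]
    rw [RCLike.real_smul_eq_coe_smul (K := ℂ) c u, inner_smul_left]
    simp [RCLike.real_smul_eq_coe_smul (K := ℂ), smul_smul]
  · intro u w w'
    ext x
    simp [rankOneC2, smul_add]
  · intro c u w
    ext x
    simp only [rankOneC2, ContinuousLinearMap.smulRight_apply, innerSL_apply_apply,
      ContinuousLinearMap.smul_apply]
    rw [smul_comm]
  · refine ⟨1, one_pos, fun u w => ?_⟩
    rw [one_mul]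
    calc ‖rankOneC2 (u, w)‖ = ‖innerSL ℂ u‖ * ‖w‖ :=
          ContinuousLinearMap.norm_smulRight_apply _ _
      _ ≤ ‖u‖ * ‖w‖ := by gcongr; exact (innerSL_apply_norm (𝕜 := ℂ) (x := u)).le

/-- Eq. (A20) of the paper: under the normalized master equation, the projector onto the
time-evolved state vector satisfies `d𝒫_t/dt = L 𝒫_t + 𝒫_t L† − 2 Re⟨v t, L (v t)⟩ 𝒫_t`. -/
theorem projector_derivative
    {E : Type*} [NormedAddCommGroup E] [InnerProductSpace ℂ E] [FiniteDimensional ℂ E]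
    (L : E →L[ℂ] E) (v : ℝ → E) (t : ℝ) (hnorm : ‖v t‖ = 1)
    (hv : HasDerivAt v (L (v t) - (inner ℂ (v t) (L (v t)) : ℂ).re • v t) t) :
    HasDerivAt (fun s => rankOneC (v s))
      (L.comp (rankOneC (v t)) + (rankOneC (v t)).comp (ContinuousLinearMap.adjoint L) -
        (((2 * (inner ℂ (v t) (L (v t)) : ℂ).re : ℝ) : ℂ)) • rankOneC (v t)) t := by
  set u := v t
  set r : ℝ := (inner ℂ u (L u) : ℂ).re
  set w : E := L u - r • u
  have h := (rankOneC2_bilinear.hasFDerivAt (u, u)).comp_hasDerivAt t (hv.prodMk hv)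
  have heq : rankOneC2_bilinear.deriv (u, u) (w, w)
      = L.comp (rankOneC u) + (rankOneC u).comp (ContinuousLinearMap.adjoint L) -
        ((2 * r : ℝ) : ℂ) • rankOneC u := by
    rw [rankOneC2_bilinear.deriv_apply]
    ext x
    simp only [ContinuousLinearMap.add_apply, ContinuousLinearMap.sub_apply,
      ContinuousLinearMap.smul_apply, ContinuousLinearMap.comp_apply,
      rankOneC2, rankOneC, ContinuousLinearMap.smulRight_apply, innerSL_apply_apply, w,
      map_smul]
    have hcoe : r • u = ((r : ℝ) : ℂ) • u := by
      rw [← smul_one_smul ℂ (r : ℝ) u, Complex.real_smul, mul_one]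
    rw [hcoe, inner_sub_left, inner_smul_left,
      ContinuousLinearMap.adjoint_inner_right, Complex.conj_ofReal]
    push_cast
    module
  rw [heq] at h
  exact h
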